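/- Let μ be a finite complex Borel measure on R^d and x ∈ R^d. Then μ({x}) = lim_{R→∞} (1/(ω_d R^d)) ∫_{|ξ| ≤ R} μ̂(ξ) e^{2πi⟨x,ξ⟩} dξ, where ω_d is the Lebesgue measure of the unit Euclidean ball in R^d. -/

import Mathlib

open MeasureTheory Filter Topology Real
open scoped RealInnerProductSpace

/-- Integral of a complex-valued function against a finite complex measure. -/
noncomputable def cInt {α : Type*} [MeasurableSpace α]
    (μ : MeasureTheory.ComplexMeasure α) (f : α → ℂ) : ℂ :=
  ((∫ x, f x ∂μ.re.toJordanDecomposition.posPart)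
      - ∫ x, f x ∂μ.re.toJordanDecomposition.negPart)
    + Complex.I * ((∫ x, f x ∂μ.im.toJordanDecomposition.posPart)
      - ∫ x, f x ∂μ.im.toJordanDecomposition.negPart)

/-- Fourier transform of a finite complex measure on `ℝ^d`:
`μ̂(ξ) = ∫ e^{-2πi⟨ξ,t⟩} dμ(t)`. -/
noncomputable def fourierMeasure {d : ℕ}
    (μ : MeasureTheory.ComplexMeasure (EuclideanSpace ℝ (Fin d)))
    (ξ : EuclideanSpace ℝ (Fin d)) : ℂ :=
  cInt μ (fun t => Complex.exp (-(2 * (π : ℂ) * Complex.I * (⟪ξ, t⟫ : ℝ))))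

namespace WienerAux
open Metric

variable {d : ℕ}

local notation "E'" => EuclideanSpace ℝ (Fin d)

noncomputable def ω (d : ℕ) : ℝ := (volume (closedBall (0 : EuclideanSpace ℝ (Fin d)) 1)).toReal

lemma ω_pos : 0 < ω d :=
  ENNReal.toReal_pos (measure_closedBall_pos _ _ one_pos).ne' measure_closedBall_lt_top.ne

lemma vol_cb (x : E') {R : ℝ} (hR : 0 ≤ R) :
    (volume (closedBall x R)).toReal = ω d * R ^ d := by
  rw [Measure.addHaar_closedBall_center, Measure.addHaar_closedBall' _ _ hR,
    finrank_euclideanSpace_fin, ENNReal.toReal_mul, ENNReal.toReal_ofReal (pow_nonneg hR d), ω]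
  ring

noncomputable def ker (s ξ : E') : ℂ := Complex.exp (2 * (π : ℂ) * Complex.I * (⟪ξ, s⟫ : ℝ))

lemma ker_cont (s : E') : Continuous (ker s) :=
  Complex.continuous_exp.comp <| continuous_const.mul <|
    Complex.continuous_ofReal.comp <| continuous_id.inner continuous_const

lemma ker_norm (s ξ : E') : ‖ker s ξ‖ = 1 := by
  rw [ker, Complex.norm_exp]
  simp [Complex.exp_re]

lemma ker_intOn (s : E') (t : Set E') (ht : IsCompact t) : IntegrableOn (ker s) t :=
  (ker_cont s).continuousOn.integrableOn_compact ht

/-- the translation/sign-flip identity. -/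
lemma int_flip (s : E') (hs : s ≠ 0) (R : ℝ) :
    (∫ ξ in closedBall ((2 * ‖s‖ ^ 2)⁻¹ • s) R, ker s ξ)
      = - ∫ ξ in closedBall (0 : E') R, ker s ξ := by
  set h : E' := (2 * ‖s‖ ^ 2)⁻¹ • s with hh
  have hns : (0:ℝ) < ‖s‖ := norm_pos_iff.2 hs
  have hinner : (⟪h, s⟫ : ℝ) = 1 / 2 := by
    rw [hh, real_inner_smul_left, real_inner_self_eq_norm_sq]
    field_simp
  have hf_add : ∀ ξ : E', ker s (ξ + h) = - ker s ξ := by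
    intro ξ
    have h1 : ((⟪ξ + h, s⟫ : ℝ) : ℂ) = ((⟪ξ, s⟫ : ℝ) : ℂ) + 1 / 2 := by
      rw [inner_add_left, hinner]; push_cast; ring
    rw [ker, ker, h1, show 2 * (π : ℂ) * Complex.I * (((⟪ξ, s⟫ : ℝ) : ℂ) + 1 / 2)
        = 2 * (π : ℂ) * Complex.I * ((⟪ξ, s⟫ : ℝ) : ℂ) + π * Complex.I by ring,
      Complex.exp_add, Complex.exp_pi_mul_I]
    ring
  have hmem : ∀ ξ : E', (ξ + h ∈ closedBall h R) ↔ (ξ ∈ closedBall (0 : E') R) := by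
    intro ξ
    simp [mem_closedBall, dist_eq_norm]
  calc (∫ ξ in closedBall h R, ker s ξ)
      = ∫ ξ, (closedBall h R).indicator (ker s) ξ :=
        (integral_indicator measurableSet_closedBall).symm
    _ = ∫ ξ, (closedBall h R).indicator (ker s) (ξ + h) :=
        (integral_add_right_eq_self _ h).symm
    _ = ∫ ξ, (closedBall (0 : E') R).indicator (fun ξ => ker s (ξ + h)) ξ := by
        congr 1; funext ξ
        by_cases hξ : ξ ∈ closedBall (0 : E') R
        · rw [Set.indicator_of_mem ((hmem ξ).mpr hξ), Set.indicator_of_mem hξ]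
        · rw [Set.indicator_of_notMem (fun hmm => hξ ((hmem ξ).mp hmm)),
            Set.indicator_of_notMem hξ]
    _ = ∫ ξ in closedBall (0 : E') R, ker s (ξ + h) :=
        integral_indicator measurableSet_closedBall
    _ = ∫ ξ in closedBall (0 : E') R, - ker s ξ := by simp_rw [hf_add]
    _ = - ∫ ξ in closedBall (0 : E') R, ker s ξ := integral_neg _

/-- quantitative bound on the ball average for `s ≠ 0`. -/
lemma int_bound (s : E') (hs : s ≠ 0) {R : ℝ} (hR : ‖(2 * ‖s‖ ^ 2)⁻¹ • s‖ ≤ R) :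
    ‖∫ ξ in closedBall (0 : E') R, ker s ξ‖
      ≤ ω d * R ^ d - ω d * (R - ‖(2 * ‖s‖ ^ 2)⁻¹ • s‖) ^ d := by
  set h : E' := (2 * ‖s‖ ^ 2)⁻¹ • s with hh
  set c : ℝ := ‖h‖ with hc
  have hc0 : 0 ≤ c := norm_nonneg _
  have hR0 : 0 ≤ R := hc0.trans hR
  set A : Set E' := closedBall (0 : E') R with hA
  set B : Set E' := closedBall h R with hB
  have IA : IntegrableOn (ker s) A := ker_intOn s _ (isCompact_closedBall _ _)
  have IB : IntegrableOn (ker s) B := ker_intOn s _ (isCompact_closedBall _ _)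
  have split : (∫ ξ in A, ker s ξ) - ∫ ξ in B, ker s ξ
      = (∫ ξ in A \ B, ker s ξ) - ∫ ξ in B \ A, ker s ξ := by
    have h1 := integral_inter_add_diff (f := ker s) (μ := volume)
      (s := A) (t := B) measurableSet_closedBall IA
    have h2 := integral_inter_add_diff (f := ker s) (μ := volume)
      (s := B) (t := A) measurableSet_closedBall IB
    rw [Set.inter_comm] at h2
    rw [← h1, ← h2]
    ring
  have hAB : A \ B ⊆ closedBall (0 : E') R \ closedBall (0 : E') (R - c) := by
    rintro ξ ⟨h₁, h₂⟩
    refine ⟨h₁, fun h₃ => h₂ ?_⟩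
    rw [mem_closedBall] at h₃ ⊢
    have hd : dist (0 : E') h = c := by simp [hc, dist_eq_norm]
    calc dist ξ h ≤ dist ξ 0 + dist 0 h := dist_triangle _ _ _
      _ ≤ (R - c) + c := by rw [hd]; linarith
      _ = R := by ring
  have hBA : B \ A ⊆ closedBall h R \ closedBall h (R - c) := by
    rintro ξ ⟨h₁, h₂⟩
    refine ⟨h₁, fun h₃ => h₂ ?_⟩
    rw [mem_closedBall] at h₃ ⊢
    have hd : dist h (0 : E') = c := by simp [hc, dist_eq_norm]
    calc dist ξ 0 ≤ dist ξ h + dist h 0 := dist_triangle _ _ _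
      _ ≤ (R - c) + c := by rw [hd]; linarith
      _ = R := by ring
  have hvol : ∀ y : E', (volume (closedBall y R \ closedBall y (R - c))).toReal
      = ω d * R ^ d - ω d * (R - c) ^ d := by
    intro y
    rw [measure_diff (closedBall_subset_closedBall (by linarith))
        measurableSet_closedBall.nullMeasurableSet measure_closedBall_lt_top.ne,
      ENNReal.toReal_sub_of_le (measure_mono (closedBall_subset_closedBall (by linarith)))
        measure_closedBall_lt_top.ne,
      vol_cb y hR0, vol_cb y (by linarith : (0:ℝ) ≤ R - c)]
  have bnd : ∀ (t : Set E') (y : E'), t ⊆ closedBall y R \ closedBall y (R - c) →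
      ‖∫ ξ in t, ker s ξ‖ ≤ ω d * R ^ d - ω d * (R - c) ^ d := by
    intro t y ht
    have htfin : volume t < ⊤ :=
      (measure_mono (ht.trans Set.diff_subset)).trans_lt measure_closedBall_lt_top
    calc ‖∫ ξ in t, ker s ξ‖ ≤ 1 * (volume t).toReal :=
        norm_setIntegral_le_of_norm_le_const htfin (fun ξ _ => (ker_norm s ξ).le)
      _ ≤ ω d * R ^ d - ω d * (R - c) ^ d := by
        rw [one_mul, ← hvol y]
        exact ENNReal.toReal_mono
          ((measure_mono Set.diff_subset).trans_lt measure_closedBall_lt_top).ne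
          (measure_mono ht)
  have key : (2:ℝ) * ‖∫ ξ in A, ker s ξ‖ ≤ 2 * (ω d * R ^ d - ω d * (R - c) ^ d) := by
    have h2 : (∫ ξ in A, ker s ξ) - ∫ ξ in B, ker s ξ = 2 * ∫ ξ in A, ker s ξ := by
      rw [hB, hh, int_flip s hs R]; ring
    have : ‖(2 : ℂ) * ∫ ξ in A, ker s ξ‖ ≤ (ω d * R ^ d - ω d * (R - c) ^ d)
        + (ω d * R ^ d - ω d * (R - c) ^ d) := by
      rw [← h2, split]
      exact (norm_sub_le _ _).trans (add_le_add (bnd _ 0 hAB) (bnd _ h hBA))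
    rw [norm_mul] at this
    simpa [two_mul] using this
  linarith

/-- decay of the normalized ball average for `s ≠ 0`. -/
lemma decay (s : E') (hs : s ≠ 0) :
    Tendsto (fun R : ℝ => ((ω d * R ^ d : ℝ) : ℂ)⁻¹ * ∫ ξ in closedBall (0 : E') R, ker s ξ)
      atTop (𝓝 0) := by
  set c : ℝ := ‖(2 * ‖s‖ ^ 2)⁻¹ • s‖ with hc
  have hc0 : 0 ≤ c := norm_nonneg _
  rw [tendsto_zero_iff_norm_tendsto_zero]
  have hbound : Tendsto (fun R : ℝ => 1 - (1 - c / R) ^ d) atTop (𝓝 0) := by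
    have h1 : Tendsto (fun R : ℝ => c / R) atTop (𝓝 0) :=
      tendsto_const_nhds.div_atTop tendsto_id
    have h2 : Tendsto (fun R : ℝ => 1 - (1 - c / R) ^ d) atTop (𝓝 (1 - (1 - 0) ^ d)) :=
      tendsto_const_nhds.sub ((tendsto_const_nhds.sub h1).pow d)
    simpa using h2
  refine squeeze_zero' (Eventually.of_forall fun R => norm_nonneg _) ?_ hbound
  filter_upwards [eventually_ge_atTop (max c 1)] with R hR
  have hR1 : (1:ℝ) ≤ R := le_trans (le_max_right _ _) hR
  have hRc : c ≤ R := le_trans (le_max_left _ _) hR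
  have hR0 : (0:ℝ) < R := lt_of_lt_of_le one_pos hR1
  have hω := ω_pos (d := d)
  have hpos : (0:ℝ) < ω d * R ^ d := by positivity
  rw [norm_mul]
  have hn : ‖((ω d * R ^ d : ℝ) : ℂ)⁻¹‖ = (ω d * R ^ d)⁻¹ := by
    rw [norm_inv, Complex.norm_real, Real.norm_of_nonneg hpos.le]
  rw [hn]
  have hb := int_bound s hs hRc
  calc (ω d * R ^ d)⁻¹ * ‖∫ ξ in closedBall (0 : E') R, ker s ξ‖
      ≤ (ω d * R ^ d)⁻¹ * (ω d * R ^ d - ω d * (R - c) ^ d) := by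
        exact mul_le_mul_of_nonneg_left hb (inv_nonneg.2 hpos.le)
    _ = 1 - (1 - c / R) ^ d := by
        have : (1 - c / R) = (R - c) / R := by field_simp
        rw [this, div_pow]
        field_simp

instance volRestrictFinite (R : ℝ) :
    IsFiniteMeasure (volume.restrict (closedBall (0 : E') R)) :=
  ⟨by rw [Measure.restrict_apply_univ]; exact measure_closedBall_lt_top⟩

lemma normalized_norm (R : ℝ) (hR : 1 ≤ R) (z : ℂ)
    (hz : ‖z‖ ≤ (volume (closedBall (0 : E') R)).toReal) :
    ‖((ω d * R ^ d : ℝ) : ℂ)⁻¹ * z‖ ≤ 1 := by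
  have hR0 : (0:ℝ) < R := lt_of_lt_of_le one_pos hR
  have hpos : (0:ℝ) < ω d * R ^ d := mul_pos ω_pos (pow_pos hR0 d)
  rw [norm_mul, norm_inv, Complex.norm_real, Real.norm_of_nonneg hpos.le]
  rw [vol_cb _ hR0.le] at hz
  rw [inv_mul_le_iff₀ hpos, mul_one]
  exact hz

lemma norm_setInt_ker (s : E') (R : ℝ) :
    ‖∫ ξ in closedBall (0 : E') R, ker s ξ‖ ≤ (volume (closedBall (0 : E') R)).toReal := by
  have := norm_setIntegral_le_of_norm_le_const (C := 1) (f := ker s)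
    (s := closedBall (0:E') R) (μ := volume) measure_closedBall_lt_top
    (fun ξ _ => (ker_norm s ξ).le)
  simpa [Measure.real] using this

/-- core lemma: Wiener averaging for a finite positive measure. -/
lemma core (ν : Measure E') [IsFiniteMeasure ν] (x : E') :
    Tendsto (fun R : ℝ => ((ω d * R ^ d : ℝ) : ℂ)⁻¹ *
      ∫ ξ in closedBall (0 : E') R,
        (∫ t, Complex.exp (-(2 * (π:ℂ) * Complex.I * (⟪ξ, t⟫ : ℝ))) ∂ν)
          * Complex.exp (2 * (π:ℂ) * Complex.I * (⟪x, ξ⟫ : ℝ)))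
      atTop (𝓝 ((ν {x}).toReal : ℂ)) := by
  have hrw : ∀ ξ : E',
      (∫ t, Complex.exp (-(2 * (π:ℂ) * Complex.I * (⟪ξ, t⟫ : ℝ))) ∂ν)
          * Complex.exp (2 * (π:ℂ) * Complex.I * (⟪x, ξ⟫ : ℝ))
        = ∫ t, ker (x - t) ξ ∂ν := by
    intro ξ
    rw [← integral_mul_const]
    congr 1; funext t
    rw [ker, ← Complex.exp_add]
    congr 1
    have h1 : (⟪ξ, x - t⟫ : ℝ) = (⟪x, ξ⟫ : ℝ) - (⟪ξ, t⟫ : ℝ) := by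
      rw [inner_sub_right, real_inner_comm]
    rw [h1]; push_cast; ring
  have hswap : ∀ R : ℝ,
      (∫ ξ in closedBall (0 : E') R, ∫ t, ker (x - t) ξ ∂ν)
        = ∫ t, (∫ ξ in closedBall (0 : E') R, ker (x - t) ξ) ∂ν := by
    intro R
    apply integral_integral_swap
    have hcont : Continuous (Function.uncurry fun (ξ t : E') => ker (x - t) ξ) := by
      refine Complex.continuous_exp.comp <| continuous_const.mul <|
        Complex.continuous_ofReal.comp ?_
      exact continuous_fst.inner (continuous_const.sub continuous_snd)
    refine (integrable_const (1:ℝ)).mono' hcont.aestronglyMeasurable ?_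
    exact Eventually.of_forall fun p => by rw [Function.uncurry]; rw [ker_norm]
  have heq : (fun R : ℝ => ((ω d * R ^ d : ℝ) : ℂ)⁻¹ *
      ∫ ξ in closedBall (0 : E') R,
        (∫ t, Complex.exp (-(2 * (π:ℂ) * Complex.I * (⟪ξ, t⟫ : ℝ))) ∂ν)
          * Complex.exp (2 * (π:ℂ) * Complex.I * (⟪x, ξ⟫ : ℝ)))
      = fun R : ℝ => ∫ t, ((ω d * R ^ d : ℝ) : ℂ)⁻¹ *
          (∫ ξ in closedBall (0 : E') R, ker (x - t) ξ) ∂ν := by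
    funext R
    simp_rw [hrw]
    rw [hswap R, ← integral_const_mul]
  rw [heq]
  have hlimval : ((ν {x}).toReal : ℂ)
      = ∫ t, ({x} : Set E').indicator (fun _ => (1:ℂ)) t ∂ν := by
    rw [integral_indicator (measurableSet_singleton x), setIntegral_const, Complex.real_smul, mul_one]
    rfl
  rw [hlimval]
  refine tendsto_integral_filter_of_dominated_convergence (fun _ => (1:ℝ)) ?_ ?_ ?_ ?_
  · -- measurability
    refine Eventually.of_forall fun R => ?_
    have hcont : Continuous fun t : E' => ∫ ξ in closedBall (0 : E') R, ker (x - t) ξ := by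
      refine continuous_of_dominated (bound := fun _ => (1:ℝ))
        (fun t => (ker_cont _).aestronglyMeasurable.restrict)
        (fun t => Eventually.of_forall fun ξ => (ker_norm _ ξ).le)
        (integrable_const 1) ?_
      refine Eventually.of_forall fun ξ => ?_
      simp only [ker]
      refine Complex.continuous_exp.comp <| continuous_const.mul <|
        Complex.continuous_ofReal.comp ?_
      exact continuous_const.inner (continuous_const.sub continuous_id)
    exact (continuous_const.mul hcont).aestronglyMeasurable
  · -- uniform bound
    filter_upwards [eventually_ge_atTop (1:ℝ)] with R hR
    refine Eventually.of_forall fun t => ?_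
    exact normalized_norm R hR _ (norm_setInt_ker _ R)
  · exact integrable_const 1
  · -- pointwise limit
    refine Eventually.of_forall fun t => ?_
    by_cases ht : t = x
    · subst ht
      rw [Set.indicator_of_mem (Set.mem_singleton t)]
      have hone : ∀ᶠ R in atTop, ((ω d * R ^ d : ℝ) : ℂ)⁻¹ *
          (∫ ξ in closedBall (0 : E') R, ker (t - t) ξ) = 1 := by
        filter_upwards [eventually_ge_atTop (1:ℝ)] with R hR
        have hR0 : (0:ℝ) < R := lt_of_lt_of_le one_pos hR
        have hker0 : ∀ ξ : E', ker (t - t) ξ = 1 := by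
          intro ξ; simp [ker, sub_self]
        simp_rw [hker0]
        rw [setIntegral_const, measureReal_def, vol_cb _ hR0.le, Complex.real_smul, mul_one]
        exact inv_mul_cancel₀ (Complex.ofReal_ne_zero.mpr
          (mul_pos ω_pos (pow_pos hR0 d)).ne')
      exact Tendsto.congr' (hone.mono fun R h => h.symm) tendsto_const_nhds
    · rw [Set.indicator_of_notMem (by simpa using ht)]
      exact decay (x - t) (sub_ne_zero.2 (Ne.symm ht))

/-- continuity of the Fourier transform of a finite measure. -/
lemma contFT (ν : Measure E') [IsFiniteMeasure ν] :
    Continuous fun ξ : E' => ∫ t, Complex.exp (-(2 * (π:ℂ) * Complex.I * (⟪ξ, t⟫ : ℝ))) ∂ν := by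
  refine continuous_of_dominated (bound := fun _ => (1:ℝ)) ?_ ?_ (integrable_const 1) ?_
  · intro ξ
    refine Continuous.aestronglyMeasurable ?_
    refine Complex.continuous_exp.comp <| Continuous.neg <| continuous_const.mul <|
      Complex.continuous_ofReal.comp ?_
    exact continuous_const.inner continuous_id
  · intro ξ
    refine Eventually.of_forall fun t => ?_
    rw [Complex.norm_exp]
    simp [Complex.exp_re]
  · refine Eventually.of_forall fun t => ?_
    refine Complex.continuous_exp.comp <| Continuous.neg <| continuous_const.mul <|
      Complex.continuous_ofReal.comp ?_
    exact continuous_id.inner continuous_const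

end WienerAux

open WienerAux Metric

/-- **Wiener's lemma on `ℝ^d` for Euclidean balls.** For a finite complex Borel measure
`μ` on `ℝ^d` and every `x`,
`μ({x}) = lim_{R→∞} (1/(ω_d R^d)) ∫_{|ξ|≤R} μ̂(ξ) e^{2πi⟨x,ξ⟩} dξ`,
where `ω_d` is the volume of the unit ball. -/
theorem wiener_lemma_balls {d : ℕ}
    (μ : MeasureTheory.ComplexMeasure (EuclideanSpace ℝ (Fin d)))
    (x : EuclideanSpace ℝ (Fin d)) :
    Tendsto (fun R : ℝ =>
        ((((volume (Metric.closedBall (0 : EuclideanSpace ℝ (Fin d)) 1)).toReal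
            * R ^ d : ℝ) : ℂ))⁻¹ *
          ∫ ξ in Metric.closedBall (0 : EuclideanSpace ℝ (Fin d)) R,
            fourierMeasure μ ξ * Complex.exp (2 * (π : ℂ) * Complex.I * (⟪x, ξ⟫ : ℝ)))
      atTop (𝓝 (μ {x})) := by
  set ν₁ := μ.re.toJordanDecomposition.posPart with hν₁
  set ν₂ := μ.re.toJordanDecomposition.negPart with hν₂
  set ν₃ := μ.im.toJordanDecomposition.posPart with hν₃
  set ν₄ := μ.im.toJordanDecomposition.negPart with hν₄
  set e : EuclideanSpace ℝ (Fin d) → ℂ :=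
    fun ξ => Complex.exp (2 * (π : ℂ) * Complex.I * (⟪x, ξ⟫ : ℝ)) with he
  set G : Measure (EuclideanSpace ℝ (Fin d)) → EuclideanSpace ℝ (Fin d) → ℂ :=
    fun ν ξ => (∫ t, Complex.exp (-(2 * (π:ℂ) * Complex.I * (⟪ξ, t⟫ : ℝ))) ∂ν) * e ξ with hG
  have he_cont : Continuous e := by
    refine Complex.continuous_exp.comp <| continuous_const.mul <|
      Complex.continuous_ofReal.comp ?_
    exact continuous_const.inner continuous_id
  have hGint : ∀ (ν : Measure (EuclideanSpace ℝ (Fin d))) [IsFiniteMeasure ν] (R : ℝ),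
      IntegrableOn (G ν) (Metric.closedBall 0 R) := by
    intro ν _ R
    exact ((contFT ν).mul he_cont).continuousOn.integrableOn_compact
      (isCompact_closedBall _ _)
  have hsplit : ∀ R : ℝ,
      (∫ ξ in Metric.closedBall (0 : EuclideanSpace ℝ (Fin d)) R,
        fourierMeasure μ ξ * e ξ)
      = ((∫ ξ in Metric.closedBall (0 : EuclideanSpace ℝ (Fin d)) R, G ν₁ ξ)
          - ∫ ξ in Metric.closedBall (0 : EuclideanSpace ℝ (Fin d)) R, G ν₂ ξ)
        + Complex.I * ((∫ ξ in Metric.closedBall (0 : EuclideanSpace ℝ (Fin d)) R, G ν₃ ξ)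
          - ∫ ξ in Metric.closedBall (0 : EuclideanSpace ℝ (Fin d)) R, G ν₄ ξ) := by
    intro R
    have h1 : (fun ξ => fourierMeasure μ ξ * e ξ)
        = fun ξ => (G ν₁ ξ - G ν₂ ξ) + Complex.I * (G ν₃ ξ - G ν₄ ξ) := by
      funext ξ
      simp only [fourierMeasure, cInt, hG, he, hν₁, hν₂, hν₃, hν₄]
      ring
    rw [h1, integral_add (f := fun ξ => G ν₁ ξ - G ν₂ ξ)
        (g := fun ξ => Complex.I * (G ν₃ ξ - G ν₄ ξ))
        ((hGint ν₁ R).sub (hGint ν₂ R))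
        (((hGint ν₃ R).sub (hGint ν₄ R)).const_mul _),
      integral_sub (hGint ν₁ R) (hGint ν₂ R), integral_const_mul,
      integral_sub (hGint ν₃ R) (hGint ν₄ R)]
  have hfun : (fun R : ℝ =>
        ((((volume (Metric.closedBall (0 : EuclideanSpace ℝ (Fin d)) 1)).toReal
            * R ^ d : ℝ) : ℂ))⁻¹ *
          ∫ ξ in Metric.closedBall (0 : EuclideanSpace ℝ (Fin d)) R,
            fourierMeasure μ ξ * e ξ)
      = fun R : ℝ =>
        (((((ω d * R ^ d : ℝ) : ℂ))⁻¹ *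
            ∫ ξ in Metric.closedBall (0 : EuclideanSpace ℝ (Fin d)) R, G ν₁ ξ)
          - ((((ω d * R ^ d : ℝ) : ℂ))⁻¹ *
            ∫ ξ in Metric.closedBall (0 : EuclideanSpace ℝ (Fin d)) R, G ν₂ ξ))
        + Complex.I * (((((ω d * R ^ d : ℝ) : ℂ))⁻¹ *
            ∫ ξ in Metric.closedBall (0 : EuclideanSpace ℝ (Fin d)) R, G ν₃ ξ)
          - ((((ω d * R ^ d : ℝ) : ℂ))⁻¹ *
            ∫ ξ in Metric.closedBall (0 : EuclideanSpace ℝ (Fin d)) R, G ν₄ ξ)) := by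
    funext R
    rw [show ((volume (Metric.closedBall (0 : EuclideanSpace ℝ (Fin d)) 1)).toReal
        * R ^ d : ℝ) = (ω d * R ^ d : ℝ) from rfl, hsplit R]
    ring
  have hlim := (((core ν₁ x).sub (core ν₂ x)).add
    (((core ν₃ x).sub (core ν₄ x)).const_mul Complex.I))
  have hval : (((ν₁ {x}).toReal : ℂ) - ((ν₂ {x}).toReal : ℂ))
      + Complex.I * (((ν₃ {x}).toReal : ℂ) - ((ν₄ {x}).toReal : ℂ)) = μ {x} := by
    have hre : μ.re {x} = (ν₁ {x}).toReal - (ν₂ {x}).toReal := by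
      conv_lhs => rw [← μ.re.toSignedMeasure_toJordanDecomposition]
      rw [JordanDecomposition.toSignedMeasure,
        Measure.toSignedMeasure_sub_apply (measurableSet_singleton x)]
      rfl
    have him : μ.im {x} = (ν₃ {x}).toReal - (ν₄ {x}).toReal := by
      conv_lhs => rw [← μ.im.toSignedMeasure_toJordanDecomposition]
      rw [JordanDecomposition.toSignedMeasure,
        Measure.toSignedMeasure_sub_apply (measurableSet_singleton x)]
      rfl
    have hz : μ {x} = ((μ.re {x} : ℝ) : ℂ) + Complex.I * ((μ.im {x} : ℝ) : ℂ) := by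
      apply Complex.ext <;>
        simp [MeasureTheory.ComplexMeasure.re_apply, MeasureTheory.ComplexMeasure.im_apply] <;> rfl
    rw [hz, hre, him]
    push_cast
    ring
  rw [hfun, ← hval]
  exact hlim
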